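/- Let H be a group, V ≤ H a subgroup, y ∈ H, φ ∈ Aut(H) with φ² = ι_y; set S = Diag_φ(V×V) and G⁺ = Diag_φ(H×H) in H wr Sym(2), and g = (y,1)τ, G = ⟨G⁺, g⟩. If y ∉ V·V^φ, then g⁻¹ ∉ SgS. -/

import Mathlib

open scoped Pointwise

/-- The permutation action of `Equiv.Perm Bool` on `Bool → H` as multiplicative
automorphisms (permuting the two coordinates of the base group of `H wr Sym(2)`). -/
def permHom (H : Type*) [Group H] : Equiv.Perm Bool →* MulAut (Bool → H) where
  toFun e :=
    { toEquiv := Equiv.arrowCongr e (Equiv.refl H)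
      map_mul' := fun _ _ => rfl }
  map_one' := by ext f b; rfl
  map_mul' := by intro e f; ext u b; rfl

/-- The wreath product `H wr Sym(2)`, realised as `(Bool → H) ⋊ Sym(Bool)`. -/
abbrev Wr (H : Type*) [Group H] := SemidirectProduct (Bool → H) (Equiv.Perm Bool) (permHom H)

/-- The element `(h, h^φ)` of the base group `H × H` of `H wr Sym(2)`
(coordinate `false` is the first entry, coordinate `true` the second). -/
def diagW {H : Type*} [Group H] (φ : MulAut H) (h : H) : Wr H :=
  ⟨fun b => bif b then φ h else h, 1⟩

/-- The element `g = (y, 1)·τ` of `H wr Sym(2)`, where `τ` is the coordinate swap. -/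
def gW {H : Type*} [Group H] (y : H) : Wr H :=
  ⟨fun b => bif b then 1 else y, Equiv.swap false true⟩

/-- With `S = Diag_φ(V×V)` and `g = (y,1)τ` in `H wr Sym(2)`, if `y ∉ V·V^φ`
then `g⁻¹ ∉ SgS`. -/
theorem stmt_14 {H : Type*} [Group H] (φ : MulAut H) (y : H)
    (hy : ∀ h : H, φ (φ h) = y⁻¹ * h * y)
    (V : Subgroup H)
    (hyV : y ∉ (V : Set H) * (⇑φ '' (V : Set H))) :
    ¬ ∃ s₁ ∈ diagW φ '' (V : Set H), ∃ s₂ ∈ diagW φ '' (V : Set H),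
        (gW y)⁻¹ = s₁ * gW y * s₂ := by
  rintro ⟨_, ⟨v₁, hv₁, rfl⟩, _, ⟨v₂, hv₂, rfl⟩, heq⟩
  apply hyV
  have h := congrArg (fun w : Wr H => w.left false) heq
  replace h : (1:H)⁻¹ = v₁ * y * φ v₂ := h
  refine ⟨v₁⁻¹, V.inv_mem hv₁, φ v₂⁻¹, ⟨v₂⁻¹, V.inv_mem hv₂, rfl⟩, ?_⟩
  have h2 := congrArg (fun z => v₁⁻¹ * z * (φ v₂)⁻¹) h
  simpa [mul_assoc, map_inv] using h2
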